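/- Let (X, Σ, P_X) be a probability space, y : X → {−1,+1} measurable (the true labels), and h₁, h₂ : X → {−1,+1} measurable with risks R(h_j) = P_X({x : h_j(x) ≠ y(x)}). Let Δ = {x : h₁(x) ≠ h₂(x)}, assume P_X(Δ) > 0, and let Q be the restriction of P_X to Δ normalized to a probability measure, with R_Δ(h_j) = Q({x ∈ Δ : h_j(x) ≠ y(x)}). Draw m ≥ 1 points independently from Q and let ĥ be an empirical-error minimizer among {h₁, h₂} on these points (the strictly worse hypothesis is selected only if its empirical error is at most the other's). Then E[R(ĥ)] ≤ min{R(h₁), R(h₂)} + |R(h₁) − R(h₂)|·exp(−m·(R_Δ(h₁) − R_Δ(h₂))²/2) ≤ min{R(h₁), R(h₂)} + 1/√m. -/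

import Mathlib

open MeasureTheory
open scoped Classical


lemma aux_cosh (u : ℝ) (hu : 0 ≤ u) :
    Real.cosh u - u * Real.sinh u ≤ Real.exp (-(u ^ 2) / 2) := by
  set f : ℝ → ℝ := fun t => Real.exp (t ^ 2 / 2) * (Real.cosh t - t * Real.sinh t) with hf
  have hd : ∀ t : ℝ, HasDerivAt f (Real.exp (t ^ 2 / 2) * (-(t ^ 2) * Real.sinh t)) t := by
    intro t
    have h1 : HasDerivAt (fun t : ℝ => t ^ 2 / 2) (2 * t ^ 1 / 2) t :=
      (hasDerivAt_pow 2 t).div_const 2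
    have h2 : HasDerivAt (fun t : ℝ => Real.exp (t ^ 2 / 2))
        (Real.exp (t ^ 2 / 2) * (2 * t ^ 1 / 2)) t := h1.exp
    have h3 : HasDerivAt (fun t : ℝ => Real.cosh t - t * Real.sinh t)
        (Real.sinh t - (1 * Real.sinh t + t * Real.cosh t)) t :=
      (Real.hasDerivAt_cosh t).sub ((hasDerivAt_id t).mul (Real.hasDerivAt_sinh t))
    have := h2.mul h3
    convert this using 1 <;> first | rfl | ring
  have hmono : AntitoneOn f (Set.Ici (0 : ℝ)) := by
    apply antitoneOn_of_deriv_nonpos (convex_Ici 0)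
    · exact fun t _ => ((hd t).differentiableAt.continuousAt).continuousWithinAt
    · exact fun t _ => ((hd t).differentiableAt).differentiableWithinAt
    · intro t ht
      rw [(hd t).deriv]
      have ht' : 0 < t := by simpa using ht
      have : 0 ≤ Real.sinh t := Real.sinh_nonneg_iff.mpr ht'.le
      have he : 0 < Real.exp (t ^ 2 / 2) := Real.exp_pos _
      have h4 : 0 ≤ Real.exp (t ^ 2 / 2) * (t ^ 2 * Real.sinh t) := by positivity
      nlinarith
  have key : f u ≤ f 0 := hmono (Set.self_mem_Ici) hu hu
  have hf0 : f 0 = 1 := by simp [hf]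
  rw [hf0] at key
  have hE : 0 < Real.exp (u ^ 2 / 2) := Real.exp_pos _
  have : Real.exp (-(u ^ 2) / 2) = (Real.exp (u ^ 2 / 2))⁻¹ := by
    rw [← Real.exp_neg]; ring_nf
  have key' : Real.exp (u ^ 2 / 2) * (Real.cosh u - u * Real.sinh u) ≤ 1 := key
  rw [this, ← one_div, le_div_iff₀ hE]
  linarith [mul_comm (Real.exp (u ^ 2 / 2)) (Real.cosh u - u * Real.sinh u)]

lemma aux_sqrt (m : ℕ) (hm : 1 ≤ m) (v u : ℝ) (hv : |v| ≤ |u|) :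
    |v| * Real.exp (-(m : ℝ) * u ^ 2 / 2) ≤ 1 / Real.sqrt m := by
  have hm0 : (0 : ℝ) < m := by exact_mod_cast hm
  set s := Real.sqrt m with hs
  have hs0 : 0 < s := Real.sqrt_pos.mpr hm0
  set t := s * |u| with ht
  have ht0 : 0 ≤ t := by positivity
  have hexp : -(m : ℝ) * u ^ 2 / 2 = -(t ^ 2 / 2) := by
    have : s ^ 2 = m := Real.sq_sqrt hm0.le
    rw [ht]; nlinarith [sq_abs u]
  rw [hexp, Real.exp_neg]
  have hE : 0 < Real.exp (t ^ 2 / 2) := Real.exp_pos _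
  have hle : t ≤ Real.exp (t ^ 2 / 2) := by
    have := Real.add_one_le_exp (t ^ 2 / 2)
    nlinarith [sq_nonneg (t - 1)]
  calc |v| * (Real.exp (t ^ 2 / 2))⁻¹ ≤ |u| * (Real.exp (t ^ 2 / 2))⁻¹ := by
        apply mul_le_mul_of_nonneg_right hv (by positivity)
    _ ≤ 1 / s := by
        rw [inv_eq_one_div, mul_one_div, div_le_div_iff₀ hE hs0, one_mul]
        linarith [mul_comm s |u|]

lemma aux_rel {X : Type*} [MeasurableSpace X] (PX : Measure X) [IsProbabilityMeasure PX]
    (y hA hB : X → ℝ) (hym : Measurable y) (hAm : Measurable hA) (hBm : Measurable hB)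
    (hΔpos : PX {x | hA x ≠ hB x} ≠ 0)
    (Q : Measure X)
    (hQ : Q = (PX {x | hA x ≠ hB x})⁻¹ • PX.restrict {x | hA x ≠ hB x}) :
    (PX {x | hA x ≠ y x}).toReal - (PX {x | hB x ≠ y x}).toReal =
      (PX {x | hA x ≠ hB x}).toReal *
        ((Q {x | hA x ≠ y x}).toReal - (Q {x | hB x ≠ y x}).toReal) := by
  set D := {x | hA x ≠ hB x} with hD
  have hDm : MeasurableSet D := (measurableSet_eq_fun hAm hBm).compl
  have hEAm : MeasurableSet {x | hA x ≠ y x} := (measurableSet_eq_fun hAm hym).compl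
  have hEBm : MeasurableSet {x | hB x ≠ y x} := (measurableSet_eq_fun hBm hym).compl
  have hDfin : PX D ≠ ⊤ := measure_ne_top _ _
  have hc0 : (PX D).toReal ≠ 0 := ENNReal.toReal_ne_zero.mpr ⟨hΔpos, hDfin⟩
  have key : ∀ (E : Set X), MeasurableSet E →
      (PX D).toReal * (Q E).toReal = (PX (E ∩ D)).toReal := by
    intro E hE
    have : Q E = (PX D)⁻¹ * PX (E ∩ D) := by
      rw [hQ, Measure.smul_apply, smul_eq_mul, Measure.restrict_apply hE]
    rw [this, ENNReal.toReal_mul, ENNReal.toReal_inv]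
    field_simp
  have hsplit : ∀ (E : Set X), (PX E).toReal = (PX (E ∩ D)).toReal + (PX (E \ D)).toReal := by
    intro E
    rw [← ENNReal.toReal_add (measure_ne_top _ _) (measure_ne_top _ _),
      measure_inter_add_diff E hDm]
  have hout : {x | hA x ≠ y x} \ D = {x | hB x ≠ y x} \ D := by
    ext x
    simp only [Set.mem_diff, Set.mem_setOf_eq, hD, not_not]
    constructor
    · rintro ⟨h1, h2⟩; rw [h2] at h1; exact ⟨h1, h2⟩
    · rintro ⟨h1, h2⟩; rw [← h2] at h1; exact ⟨h1, h2⟩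
  rw [hsplit {x | hA x ≠ y x}, hsplit {x | hB x ≠ y x}, hout,
    ← key _ hEAm, ← key _ hEBm]
  ring

lemma aux_iff (a b c : ℝ) (ha : a = 1 ∨ a = -1) (hb : b = 1 ∨ b = -1)
    (hc : c = 1 ∨ c = -1) (hab : a ≠ b) : (a ≠ c) ↔ ¬(b ≠ c) := by
  rcases ha with h1 | h1 <;> rcases hb with h2 | h2 <;> rcases hc with h3 | h3 <;>
    simp [h1, h2, h3] at hab ⊢ <;> norm_num

lemma aux_sum1 {X : Type*} [MeasurableSpace X] (PX : Measure X) [IsProbabilityMeasure PX]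
    (y hA hB : X → ℝ) (hym : Measurable y) (hAm : Measurable hA) (hBm : Measurable hB)
    (hyv : ∀ x, y x = 1 ∨ y x = -1) (hAv : ∀ x, hA x = 1 ∨ hA x = -1)
    (hBv : ∀ x, hB x = 1 ∨ hB x = -1)
    (hΔpos : PX {x | hA x ≠ hB x} ≠ 0)
    (Q : Measure X)
    (hQ : Q = (PX {x | hA x ≠ hB x})⁻¹ • PX.restrict {x | hA x ≠ hB x}) :
    (Q {x | hA x ≠ y x}).toReal + (Q {x | hB x ≠ y x}).toReal = 1 := by
  set D := {x | hA x ≠ hB x} with hD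
  have hDm : MeasurableSet D := (measurableSet_eq_fun hAm hBm).compl
  have hEAm : MeasurableSet {x | hA x ≠ y x} := (measurableSet_eq_fun hAm hym).compl
  have hEBm : MeasurableSet {x | hB x ≠ y x} := (measurableSet_eq_fun hBm hym).compl
  have hDfin : PX D ≠ ⊤ := measure_ne_top _ _
  have hiff : ∀ x ∈ D, ((hA x ≠ y x) ↔ ¬(hB x ≠ y x)) := fun x hx =>
    aux_iff _ _ _ (hAv x) (hBv x) (hyv x) hx
  have hunion : ({x | hA x ≠ y x} ∩ D) ∪ ({x | hB x ≠ y x} ∩ D) = D := by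
    ext x
    simp only [Set.mem_union, Set.mem_inter_iff, Set.mem_setOf_eq]
    constructor
    · rintro (⟨_, h⟩ | ⟨_, h⟩) <;> exact h
    · intro hx
      by_cases hA1 : hA x ≠ y x
      · exact Or.inl ⟨hA1, hx⟩
      · exact Or.inr ⟨by have := (hiff x hx); tauto, hx⟩
  have hdisj : Disjoint ({x | hA x ≠ y x} ∩ D) ({x | hB x ≠ y x} ∩ D) := by
    rw [Set.disjoint_left]
    rintro x ⟨h1, hx⟩ ⟨h2, _⟩
    exact ((hiff x hx).mp h1) h2
  have hsum : PX ({x | hA x ≠ y x} ∩ D) + PX ({x | hB x ≠ y x} ∩ D) = PX D := by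
    rw [← measure_union hdisj (hEBm.inter hDm), hunion]
  have hQE : ∀ (E : Set X), MeasurableSet E → Q E = (PX D)⁻¹ * PX (E ∩ D) := by
    intro E hE
    rw [hQ, Measure.smul_apply, smul_eq_mul, Measure.restrict_apply hE]
  have h1 : Q {x | hA x ≠ y x} + Q {x | hB x ≠ y x} = 1 := by
    rw [hQE _ hEAm, hQE _ hEBm, ← mul_add, hsum, ENNReal.inv_mul_cancel hΔpos hDfin]
  have hfinA : Q {x | hA x ≠ y x} ≠ ⊤ := by
    intro h; rw [h] at h1; simp at h1
  have hfinB : Q {x | hB x ≠ y x} ≠ ⊤ := by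
    intro h; rw [h, add_top] at h1; simp at h1
  rw [← ENNReal.toReal_add hfinA hfinB, h1, ENNReal.toReal_one]

lemma aux_main {X : Type*} [MeasurableSpace X] (PX : Measure X) [IsProbabilityMeasure PX]
    (y hA hB : X → ℝ) (hym : Measurable y) (hAm : Measurable hA) (hBm : Measurable hB)
    (hyv : ∀ x, y x = 1 ∨ y x = -1) (hAv : ∀ x, hA x = 1 ∨ hA x = -1)
    (hBv : ∀ x, hB x = 1 ∨ hB x = -1)
    (hΔpos : PX {x | hA x ≠ hB x} ≠ 0)
    (Q : Measure X) [IsProbabilityMeasure Q]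
    (hQ : Q = (PX {x | hA x ≠ hB x})⁻¹ • PX.restrict {x | hA x ≠ hB x})
    (m : ℕ) (hm : 1 ≤ m)
    (hhat : (Fin m → X) → X → ℝ)
    (hsel : ∀ ω : Fin m → X,
      (hhat ω = hA ∧
        ∑ i, (if hA (ω i) ≠ y (ω i) then (1 : ℝ) else 0) ≤
        ∑ i, (if hB (ω i) ≠ y (ω i) then (1 : ℝ) else 0)) ∨
      (hhat ω = hB ∧
        ∑ i, (if hB (ω i) ≠ y (ω i) then (1 : ℝ) else 0) ≤
        ∑ i, (if hA (ω i) ≠ y (ω i) then (1 : ℝ) else 0)))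
    (hord : (PX {x | hB x ≠ y x}).toReal ≤ (PX {x | hA x ≠ y x}).toReal) :
    (∫ ω, (PX {x | hhat ω x ≠ y x}).toReal ∂(Measure.pi fun _ : Fin m => Q)) ≤
      (PX {x | hB x ≠ y x}).toReal +
        ((PX {x | hA x ≠ y x}).toReal - (PX {x | hB x ≠ y x}).toReal) *
          Real.exp (-(m : ℝ) *
            ((Q {x | hA x ≠ y x}).toReal - (Q {x | hB x ≠ y x}).toReal) ^ 2 / 2) := by
  classical
  set D := {x | hA x ≠ hB x} with hDdef
  have hDm : MeasurableSet D := (measurableSet_eq_fun hAm hBm).compl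
  have hEAm : MeasurableSet {x | hA x ≠ y x} := (measurableSet_eq_fun hAm hym).compl
  have hEBm : MeasurableSet {x | hB x ≠ y x} := (measurableSet_eq_fun hBm hym).compl
  set RA := (PX {x | hA x ≠ y x}).toReal with hRA
  set RB := (PX {x | hB x ≠ y x}).toReal with hRB
  set pA := (Q {x | hA x ≠ y x}).toReal with hpA
  set pB := (Q {x | hB x ≠ y x}).toReal with hpB
  set u := pA - pB with hu
  set μ := Measure.pi fun _ : Fin m => Q with hμ
  have : IsProbabilityMeasure μ := by rw [hμ]; infer_instance
  set eA : X → ℝ := fun x => if hA x ≠ y x then 1 else 0 with heA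
  set eB : X → ℝ := fun x => if hB x ≠ y x then 1 else 0 with heB
  have heAm : Measurable eA := Measurable.ite hEAm measurable_const measurable_const
  have heBm : Measurable eB := Measurable.ite hEBm measurable_const measurable_const
  set A : Set (Fin m → X) := {ω | ∑ i, eA (ω i) ≤ ∑ i, eB (ω i)} with hA'
  have hAmeas : MeasurableSet A := by
    apply measurableSet_le
    · exact Finset.measurable_sum _ fun i _ => heAm.comp (measurable_pi_apply i)
    · exact Finset.measurable_sum _ fun i _ => heBm.comp (measurable_pi_apply i)
  -- pointwise bound
  have hpt : ∀ ω, (PX {x | hhat ω x ≠ y x}).toReal ≤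
      RB + A.indicator (fun _ => RA - RB) ω := by
    intro ω
    rcases hsel ω with ⟨he, hle⟩ | ⟨he, hle⟩
    · have hωA : ω ∈ A := by
        simp only [hA', Set.mem_setOf_eq, heA, heB]
        exact hle
      rw [he, Set.indicator_of_mem hωA]
      simp only [← hRA]
      linarith
    · rw [he]
      have h0 : (0:ℝ) ≤ A.indicator (fun _ => RA - RB) ω :=
        Set.indicator_nonneg (fun _ _ => by linarith) ω
      simp only [← hRB]
      linarith
  -- integral bound
  have hgint : Integrable (fun ω => RB + A.indicator (fun _ => RA - RB) ω) μ :=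
    (integrable_const RB).add ((integrable_const (RA - RB)).indicator hAmeas)
  have hint1 : (∫ ω, (PX {x | hhat ω x ≠ y x}).toReal ∂μ) ≤
      RB + (μ A).toReal * (RA - RB) := by
    calc (∫ ω, (PX {x | hhat ω x ≠ y x}).toReal ∂μ) ≤
        ∫ ω, (RB + A.indicator (fun _ => RA - RB) ω) ∂μ := by
          apply integral_mono_of_nonneg
          · exact Filter.Eventually.of_forall fun ω => ENNReal.toReal_nonneg
          · exact hgint
          · exact Filter.Eventually.of_forall hpt
      _ = RB + (μ A).toReal * (RA - RB) := by
          rw [integral_add (integrable_const RB) ((integrable_const (RA - RB)).indicator hAmeas),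
            integral_const, integral_indicator_const _ hAmeas]
          simp [measure_univ, Measure.real]
  refine le_trans hint1 ?_
  apply add_le_add_right
  rcases eq_or_lt_of_le hord with heq | hlt
  · rw [← heq]; simp
  -- now RB < RA, so u > 0
  have hrel := aux_rel PX y hA hB hym hAm hBm hΔpos Q hQ
  rw [← hRA, ← hRB, ← hpA, ← hpB, ← hu] at hrel
  have hc1 : (PX D).toReal ≤ 1 := by
    have := prob_le_one (μ := PX) (s := D)
    simpa using ENNReal.toReal_mono ENNReal.one_ne_top this
  have hc0 : 0 < (PX D).toReal :=
    ENNReal.toReal_pos hΔpos (measure_ne_top _ _)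
  have hupos : 0 < u := by nlinarith
  -- Chernoff bound on μ A
  have hchern : (μ A).toReal ≤ Real.exp (-(m : ℝ) * u ^ 2 / 2) := by
    letI : MeasureSpace X := ⟨Q⟩
    set G : X → ℝ := fun x => Real.exp (u * (eB x - eA x)) with hG
    have hGm : Measurable G :=
      Real.measurable_exp.comp ((heBm.sub heAm).const_mul u)
    have hGnn : ∀ x, 0 ≤ G x := fun x => (Real.exp_pos _).le
    have hGle : ∀ x, G x ≤ Real.exp u := by
      intro x
      apply Real.exp_le_exp.mpr
      have h1 : eB x - eA x ≤ 1 := by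
        simp only [heA, heB]
        split_ifs <;> norm_num
      nlinarith
    have hFm : Measurable fun ω : Fin m → X => ∏ i, G (ω i) :=
      Finset.measurable_prod _ fun i _ => hGm.comp (measurable_pi_apply i)
    have hFint : Integrable (fun ω : Fin m → X => ∏ i, G (ω i)) μ := by
      apply Integrable.mono' (integrable_const (Real.exp u ^ m)) hFm.aestronglyMeasurable
      apply Filter.Eventually.of_forall
      intro ω
      rw [Real.norm_eq_abs, abs_of_nonneg (Finset.prod_nonneg fun i _ => hGnn _)]
      calc ∏ i, G (ω i) ≤ ∏ _i : Fin m, Real.exp u :=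
            Finset.prod_le_prod (fun i _ => hGnn _) (fun i _ => hGle _)
        _ = Real.exp u ^ m := by simp
    have hind : ∀ ω, A.indicator (fun _ => (1:ℝ)) ω ≤ ∏ i, G (ω i) := by
      intro ω
      by_cases hω : ω ∈ A
      · rw [Set.indicator_of_mem hω]
        have hprod : ∏ i, G (ω i) = Real.exp (∑ i, u * (eB (ω i) - eA (ω i))) :=
          (Real.exp_sum _ _).symm
        rw [hprod]
        apply Real.one_le_exp
        have hω' : ∑ i, eA (ω i) ≤ ∑ i, eB (ω i) := hω
        rw [show (∑ i, u * (eB (ω i) - eA (ω i))) =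
            u * ((∑ i, eB (ω i)) - ∑ i, eA (ω i)) by
          rw [← Finset.sum_sub_distrib, Finset.mul_sum]]
        nlinarith
      · rw [Set.indicator_of_notMem hω]
        exact Finset.prod_nonneg fun i _ => hGnn _
    have hμA : (μ A).toReal ≤ ∫ ω, ∏ i, G (ω i) ∂μ := by
      rw [← measureReal_def, ← integral_indicator_one hAmeas]
      exact integral_mono ((integrable_const (1:ℝ)).indicator hAmeas) hFint hind
    have hpi : (∫ ω, ∏ i, G (ω i) ∂μ) = (∫ x, G x ∂Q) ^ m := by
      rw [hμ]
      simpa using MeasureTheory.integral_fintype_prod_eq_pow (ι := Fin m) G (μ := Q)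
    -- compute ∫ G dQ
    have hQDc : Q Dᶜ = 0 := by
      rw [hQ, Measure.smul_apply, smul_eq_mul, Measure.restrict_apply hDm.compl]
      simp
    have haeD : ∀ᵐ x ∂Q, x ∈ D := by
      rw [ae_iff]
      exact hQDc
    have hiff : ∀ x ∈ D, ((hA x ≠ y x) ↔ ¬(hB x ≠ y x)) := fun x hx =>
      aux_iff _ _ _ (hAv x) (hBv x) (hyv x) hx
    have hae : G =ᵐ[Q] fun x => ({x | hA x ≠ y x}.indicator (fun _ => Real.exp (-u)) x +
        {x | hA x ≠ y x}ᶜ.indicator (fun _ => Real.exp u) x) := by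
      filter_upwards [haeD] with x hx
      by_cases hxa : hA x ≠ y x
      · have hxb : ¬(hB x ≠ y x) := (hiff x hx).mp hxa
        simp only [hG, heA, heB, if_pos hxa, if_neg hxb,
          Set.indicator_of_mem (show x ∈ {x | hA x ≠ y x} from hxa),
          Set.indicator_of_notMem (show x ∉ {x | hA x ≠ y x}ᶜ by simpa using hxa)]
        ring_nf
      · have hxb : hB x ≠ y x := by
          have := (hiff x hx); tauto
        simp only [hG, heA, heB, if_neg hxa, if_pos hxb,
          Set.indicator_of_notMem (show x ∉ {x | hA x ≠ y x} from hxa),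
          Set.indicator_of_mem (show x ∈ {x | hA x ≠ y x}ᶜ by simpa using hxa)]
        ring_nf
    have hGQ : (∫ x, G x ∂Q) = pA * Real.exp (-u) + (1 - pA) * Real.exp u := by
      rw [integral_congr_ae hae, integral_add ((integrable_const _).indicator hEAm)
        ((integrable_const _).indicator hEAm.compl),
        integral_indicator_const _ hEAm, integral_indicator_const _ hEAm.compl]
      have hcompl : (Q {x | hA x ≠ y x}ᶜ).toReal = 1 - pA := by
        rw [prob_compl_eq_one_sub hEAm]
        rw [ENNReal.toReal_sub_of_le prob_le_one ENNReal.one_ne_top]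
        simp [hpA]
      rw [measureReal_def, measureReal_def, hcompl]
      simp only [smul_eq_mul]
      rfl
    have hsum1 := aux_sum1 PX y hA hB hym hAm hBm hyv hAv hBv hΔpos Q hQ
    rw [← hpA, ← hpB] at hsum1
    have hpAval : pA = (1 + u) / 2 := by rw [hu]; linarith
    have hGbound : (∫ x, G x ∂Q) ≤ Real.exp (-(u ^ 2) / 2) := by
      rw [hGQ, hpAval]
      calc (1 + u) / 2 * Real.exp (-u) + (1 - (1 + u) / 2) * Real.exp u
          = Real.cosh u - u * Real.sinh u := by
            rw [Real.cosh_eq, Real.sinh_eq]; ring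
        _ ≤ Real.exp (-(u ^ 2) / 2) := aux_cosh u hupos.le
    calc (μ A).toReal ≤ (∫ x, G x ∂Q) ^ m := hpi ▸ hμA
      _ ≤ Real.exp (-(u ^ 2) / 2) ^ m := by
          apply pow_le_pow_left₀ (integral_nonneg fun x => hGnn x) hGbound
      _ = Real.exp (-(m : ℝ) * u ^ 2 / 2) := by
          rw [← Real.exp_nat_mul]
          congr 1
          ring
  calc (μ A).toReal * (RA - RB) ≤ Real.exp (-(m : ℝ) * u ^ 2 / 2) * (RA - RB) := by
        apply mul_le_mul_of_nonneg_right hchern (by linarith)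
    _ = (RA - RB) * Real.exp (-(m : ℝ) * u ^ 2 / 2) := by ring

/-- expected-risk bound for the verification step of agnostic GBS.
`h₁, h₂ : X → {−1,+1}` have risks `R(h_j) = P_X(h_j ≠ y)`, `Δ = {h₁ ≠ h₂}` has positive
measure, `Q` is the normalized restriction of `P_X` to `Δ`, and
`R_Δ(h_j) = Q(h_j ≠ y)`. If `ĥ` is an empirical-error minimizer among `{h₁, h₂}` on `m`
i.i.d. draws from `Q`, then
`E[R(ĥ)] ≤ min{R(h₁),R(h₂)} + |R(h₁) − R(h₂)|·exp(−m(R_Δ(h₁) − R_Δ(h₂))²/2)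
         ≤ min{R(h₁),R(h₂)} + 1/√m`. -/
theorem stmt15 {X : Type*} [MeasurableSpace X] (PX : Measure X) [IsProbabilityMeasure PX]
    (y h₁ h₂ : X → ℝ) (hym : Measurable y) (h₁m : Measurable h₁) (h₂m : Measurable h₂)
    (hyv : ∀ x, y x = 1 ∨ y x = -1) (h₁v : ∀ x, h₁ x = 1 ∨ h₁ x = -1)
    (h₂v : ∀ x, h₂ x = 1 ∨ h₂ x = -1)
    (hΔpos : PX {x | h₁ x ≠ h₂ x} ≠ 0)
    (Q : Measure X) [IsProbabilityMeasure Q]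
    (hQ : Q = (PX {x | h₁ x ≠ h₂ x})⁻¹ • PX.restrict {x | h₁ x ≠ h₂ x})
    (m : ℕ) (hm : 1 ≤ m)
    (hhat : (Fin m → X) → X → ℝ)
    (hsel : ∀ ω : Fin m → X,
      (hhat ω = h₁ ∧
        ∑ i, (if h₁ (ω i) ≠ y (ω i) then (1 : ℝ) else 0) ≤
        ∑ i, (if h₂ (ω i) ≠ y (ω i) then (1 : ℝ) else 0)) ∨
      (hhat ω = h₂ ∧
        ∑ i, (if h₂ (ω i) ≠ y (ω i) then (1 : ℝ) else 0) ≤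
        ∑ i, (if h₁ (ω i) ≠ y (ω i) then (1 : ℝ) else 0))) :
    (∫ ω, (PX {x | hhat ω x ≠ y x}).toReal ∂(Measure.pi fun _ : Fin m => Q)) ≤
      min (PX {x | h₁ x ≠ y x}).toReal (PX {x | h₂ x ≠ y x}).toReal +
        |(PX {x | h₁ x ≠ y x}).toReal - (PX {x | h₂ x ≠ y x}).toReal| *
          Real.exp (-(m : ℝ) *
            ((Q {x | h₁ x ≠ y x}).toReal - (Q {x | h₂ x ≠ y x}).toReal) ^ 2 / 2) ∧
    min (PX {x | h₁ x ≠ y x}).toReal (PX {x | h₂ x ≠ y x}).toReal +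
        |(PX {x | h₁ x ≠ y x}).toReal - (PX {x | h₂ x ≠ y x}).toReal| *
          Real.exp (-(m : ℝ) *
            ((Q {x | h₁ x ≠ y x}).toReal - (Q {x | h₂ x ≠ y x}).toReal) ^ 2 / 2) ≤
      min (PX {x | h₁ x ≠ y x}).toReal (PX {x | h₂ x ≠ y x}).toReal +
        1 / Real.sqrt m := by
  have hrel := aux_rel PX y h₁ h₂ hym h₁m h₂m hΔpos Q hQ
  have hDle1 : (PX {x | h₁ x ≠ h₂ x}).toReal ≤ 1 := by
    simpa using ENNReal.toReal_mono ENNReal.one_ne_top (prob_le_one (μ := PX))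
  constructor
  · -- first inequality
    rcases le_total (PX {x | h₂ x ≠ y x}).toReal (PX {x | h₁ x ≠ y x}).toReal with hord | hord
    · have := aux_main PX y h₁ h₂ hym h₁m h₂m hyv h₁v h₂v hΔpos Q hQ m hm hhat hsel hord
      rw [min_eq_right hord, abs_of_nonneg (by linarith : (0:ℝ) ≤ _)]
      exact this
    · have hsets : {x | h₂ x ≠ h₁ x} = {x | h₁ x ≠ h₂ x} := by
        ext x; exact ne_comm
      have hΔpos' : PX {x | h₂ x ≠ h₁ x} ≠ 0 := by rw [hsets]; exact hΔpos
      have hQ' : Q = (PX {x | h₂ x ≠ h₁ x})⁻¹ • PX.restrict {x | h₂ x ≠ h₁ x} := by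
        rw [hsets]; exact hQ
      have hsel' : ∀ ω : Fin m → X,
          (hhat ω = h₂ ∧
            ∑ i, (if h₂ (ω i) ≠ y (ω i) then (1 : ℝ) else 0) ≤
            ∑ i, (if h₁ (ω i) ≠ y (ω i) then (1 : ℝ) else 0)) ∨
          (hhat ω = h₁ ∧
            ∑ i, (if h₁ (ω i) ≠ y (ω i) then (1 : ℝ) else 0) ≤
            ∑ i, (if h₂ (ω i) ≠ y (ω i) then (1 : ℝ) else 0)) := fun ω => (hsel ω).symm
      have := aux_main PX y h₂ h₁ hym h₂m h₁m hyv h₂v h₁v hΔpos' Q hQ' m hm hhat hsel' hord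
      rw [min_eq_left hord, abs_of_nonpos (by linarith : _ ≤ (0:ℝ)), neg_sub]
      rw [show -(m : ℝ) *
            ((Q {x | h₂ x ≠ y x}).toReal - (Q {x | h₁ x ≠ y x}).toReal) ^ 2 / 2 =
          -(m : ℝ) *
            ((Q {x | h₁ x ≠ y x}).toReal - (Q {x | h₂ x ≠ y x}).toReal) ^ 2 / 2 by
        ring] at this
      exact this
  · -- second inequality
    apply add_le_add_right
    have habs : |(PX {x | h₁ x ≠ y x}).toReal - (PX {x | h₂ x ≠ y x}).toReal| ≤
        |(Q {x | h₁ x ≠ y x}).toReal - (Q {x | h₂ x ≠ y x}).toReal| := by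
      rw [hrel, abs_mul, abs_of_nonneg ENNReal.toReal_nonneg]
      nlinarith [abs_nonneg ((Q {x | h₁ x ≠ y x}).toReal - (Q {x | h₂ x ≠ y x}).toReal)]
    calc |(PX {x | h₁ x ≠ y x}).toReal - (PX {x | h₂ x ≠ y x}).toReal| *
          Real.exp (-(m : ℝ) *
            ((Q {x | h₁ x ≠ y x}).toReal - (Q {x | h₂ x ≠ y x}).toReal) ^ 2 / 2) ≤
        |(Q {x | h₁ x ≠ y x}).toReal - (Q {x | h₂ x ≠ y x}).toReal| *
          Real.exp (-(m : ℝ) *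
            ((Q {x | h₁ x ≠ y x}).toReal - (Q {x | h₂ x ≠ y x}).toReal) ^ 2 / 2) :=
          mul_le_mul_of_nonneg_right habs (Real.exp_pos _).le
      _ ≤ 1 / Real.sqrt m :=
          aux_sqrt m hm _ _ (le_refl _)
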